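/- Let G act locally 2-transitively on T and let F have characteristic not dividing the Steinitz order of the closure of G. For vertices v ∈ L_n, w ∈ L_m with n < m, and nontrivial irreducible constituents π of F[D(v)]⁰ and σ of F[D(w)]⁰, the induced representations Ind_{St_G(v)}^G(π) and Ind_{St_G(w)}^G(σ) are not isomorphic. -/

import Mathlib

/-- Vertices of level `n` of the spherically symmetric rooted tree on `(X i)`. -/
abbrev Vert (X : ℕ → Type) (n : ℕ) := ∀ i : Fin n, X i.val

/-- The predecessor (parent) of a vertex of level `n+1`. -/
def pred {X : ℕ → Type} {n : ℕ} (v : Vert X (n + 1)) : Vert X n :=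
  fun i => v i.castSucc

/-- A (root-preserving) action of `G` on the tree: compatible actions on all levels. -/
structure TreeAction (X : ℕ → Type) (G : Type) [Group G] where
  ρ : ∀ n : ℕ, G →* Equiv.Perm (Vert X n)
  compat : ∀ (n : ℕ) (g : G) (v : Vert X (n + 1)), pred (ρ (n + 1) g v) = ρ n g (pred v)

variable {X : ℕ → Type} {G : Type} [Group G]

/-- Spherically transitive action. -/
def SphTrans (A : TreeAction X G) : Prop := ∀ (n : ℕ) (u v : Vert X n), ∃ g : G, A.ρ n g u = v

/-- Locally 2-transitive action. -/
def LocTwoTrans (A : TreeAction X G) : Prop :=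
  SphTrans A ∧ ∀ (n : ℕ) (u v : Vert X n), u ≠ v →
    ∀ u₁ u₂ v₁ v₂ : Vert X (n + 1), pred u₁ = u → pred u₂ = u → pred v₁ = v → pred v₂ = v →
      ∃ g : G, A.ρ n g u = u ∧ A.ρ n g v = v ∧ A.ρ (n + 1) g u₁ = u₂ ∧ A.ρ (n + 1) g v₁ = v₂

variable [∀ i, DecidableEq (X i)]

/-- Length of the longest common prefix of two vertices of level `n`. -/
def cpl {n : ℕ} (u v : Vert X n) : ℕ :=
  Nat.findGreatest (fun k => ∀ i : Fin n, (i : ℕ) < k → u i = v i) n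

/-- The shortest-path distance between two vertices of level `n`. -/
def tdist {n : ℕ} (u v : Vert X n) : ℕ := 2 * (n - cpl u v)

/-- The space of equivariant linear maps between two representations. -/
def repHom {F : Type} [Field F] {G : Type} [Monoid G] {V W : Type}
    [AddCommGroup V] [Module F V] [AddCommGroup W] [Module F W]
    (ρV : Representation F G V) (ρW : Representation F G W) :
    Submodule F (V →ₗ[F] W) where
  carrier := {φ | ∀ g : G, φ ∘ₗ ρV g = ρW g ∘ₗ φ}
  add_mem' := by
    intro a b ha hb g
    rw [LinearMap.add_comp, LinearMap.comp_add, ha g, hb g]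
  zero_mem' := by
    intro g
    simp
  smul_mem' := by
    intro c φ hφ g
    rw [LinearMap.smul_comp, LinearMap.comp_smul, hφ g]

/-- A representation is irreducible if it is nonzero and has no proper nonzero
invariant subspace. -/
def Representation.IsIrred {F : Type} [Field F] {G : Type} [Monoid G] {V : Type}
    [AddCommGroup V] [Module F V] (ρ : Representation F G V) : Prop :=
  Nontrivial V ∧ ∀ W : Submodule F V, (∀ g : G, ∀ x ∈ W, ρ g x ∈ W) → W = ⊥ ∨ W = ⊤

/-- A representation is trivial if the group acts identically. -/
def Representation.IsTriv {F : Type} [Field F] {G : Type} [Monoid G] {V : Type}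
    [AddCommGroup V] [Module F V] (ρ : Representation F G V) : Prop :=
  ∀ (g : G) (x : V), ρ g x = x

/-- `π` occurs in `ρ`, i.e. `π` is isomorphic to a subrepresentation of `ρ`. -/
def Representation.OccursIn {F : Type} [Field F] {G : Type} [Monoid G] {V W : Type}
    [AddCommGroup V] [Module F V] [AddCommGroup W] [Module F W]
    (π : Representation F G V) (ρ : Representation F G W) : Prop :=
  ∃ j : V →ₗ[F] W, Function.Injective j ∧ ∀ (g : G) (x : V), j (π g x) = ρ g (j x)

/-- The carrier of the representation induced from a representation `π` of a
subgroup `S ≤ G`: the functions `f : G → V` with `f (s * x) = π s (f x)`. -/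
def IndCarrier {F : Type} [Field F] {G : Type} [Group G] (S : Subgroup G) {V : Type}
    [AddCommGroup V] [Module F V] (π : Representation F S V) :
    Submodule F (G → V) where
  carrier := {f | ∀ (s : S) (x : G), f (↑s * x) = π s (f x)}
  add_mem' := by
    intro a b ha hb s x
    simp only [Pi.add_apply, ha s x, hb s x, map_add]
  zero_mem' := by
    intro s x
    simp
  smul_mem' := by
    intro c f hf s x
    simp only [Pi.smul_apply, hf s x, map_smul]

/-- The representation of `G` induced from a representation `π` of a subgroup
`S ≤ G`, by right translation on functions. -/
def IndRep {F : Type} [Field F] {G : Type} [Group G] (S : Subgroup G) {V : Type}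
    [AddCommGroup V] [Module F V] (π : Representation F S V) :
    Representation F G (IndCarrier S π) where
  toFun h :=
    { toFun := fun f => ⟨fun x => (f : G → V) (x * h), by
        intro s x
        have := f.2 s (x * h)
        simpa [mul_assoc] using this⟩
      map_add' := fun f g => rfl
      map_smul' := fun c f => rfl }
  map_one' := by
    apply LinearMap.ext
    intro f
    apply Subtype.ext
    funext x
    simp
  map_mul' := by
    intro a b
    apply LinearMap.ext
    intro f
    apply Subtype.ext
    funext x
    simp [mul_assoc]

/-- The stabiliser of the vertex `v` in `G`. -/
def stab {X : ℕ → Type} {G : Type} [Group G] (A : TreeAction X G) {n : ℕ}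
    (v : Vert X n) : Subgroup G where
  carrier := {g | A.ρ n g v = v}
  one_mem' := by simp
  mul_mem' := by
    intro a b ha hb
    simp only [Set.mem_setOf_eq, map_mul, Equiv.Perm.mul_apply] at *
    rw [hb, ha]
  inv_mem' := by
    intro a ha
    simp only [Set.mem_setOf_eq, map_inv] at *
    exact (Equiv.symm_apply_eq _).mpr ha.symm

/-- The set of descendants of the vertex `v`. -/
def Desc (X : ℕ → Type) {n : ℕ} (v : Vert X n) : Type :=
  {w : Vert X (n + 1) // pred w = v}

/-- The stabiliser of `v` permutes the descendants of `v`. -/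
def descPermHom {X : ℕ → Type} {G : Type} [Group G] (A : TreeAction X G) {n : ℕ}
    (v : Vert X n) : stab A v →* Equiv.Perm (Desc X v) where
  toFun g :=
    { toFun := fun w => ⟨A.ρ (n + 1) g.1 w.1, by rw [A.compat, w.2]; exact g.2⟩
      invFun := fun w => ⟨A.ρ (n + 1) g.1⁻¹ w.1, by
        rw [A.compat, w.2]
        exact (stab A v).inv_mem g.2⟩
      left_inv := fun w => Subtype.ext (by
        simp [← Equiv.Perm.mul_apply, ← map_mul])
      right_inv := fun w => Subtype.ext (by
        show A.ρ (n + 1) g.1 (A.ρ (n + 1) g.1⁻¹ w.1) = w.1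
        rw [← Equiv.Perm.mul_apply, ← map_mul, mul_inv_cancel, map_one, Equiv.Perm.one_apply]) }
  map_one' := by
    ext w
    simp [Equiv.Perm.one_apply]
    rfl
  map_mul' := by
    intro a b
    ext w
    simp [Equiv.Perm.mul_apply]
    rfl

/-- The old `Representation.ofMulAction`, on `H →₀ k` via `Finsupp.lmapDomain`. -/
noncomputable def ofMulActionFinsupp (k G H : Type) [Field k] [Monoid G] [MulAction G H] :
    Representation k G (H →₀ k) where
  toFun g := Finsupp.lmapDomain k k (g • ·)
  map_one' := by
    show Finsupp.lmapDomain k k (fun x : H => (1 : G) • x) = LinearMap.id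
    simp only [one_smul]
    exact Finsupp.lmapDomain_id k k
  map_mul' := fun g h => by
    show Finsupp.lmapDomain k k (fun x : H => (g * h) • x) =
      (Finsupp.lmapDomain k k (g • ·)) ∘ₗ (Finsupp.lmapDomain k k (h • ·))
    simp only [mul_smul]
    exact Finsupp.lmapDomain_comp k k (h • ·) (g • ·)

/-- The permutation representation of the stabiliser of `v` on `F[D(v)]`. -/
noncomputable def descRep (F : Type) [Field F] {X : ℕ → Type} {G : Type} [Group G]
    (A : TreeAction X G) {n : ℕ} (v : Vert X n) :
    Representation F (stab A v) (Desc X v →₀ F) :=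
  letI : MulAction (stab A v) (Desc X v) := MulAction.compHom _ (descPermHom A v)
  ofMulActionFinsupp F (stab A v) (Desc X v)

/-- The permutation representation of `G` on `F[L_n]`. -/
noncomputable def levelRep (F : Type) [Field F] {X : ℕ → Type} {G : Type} [Group G]
    (A : TreeAction X G) (n : ℕ) : Representation F G (Vert X n →₀ F) :=
  letI : MulAction G (Vert X n) := MulAction.compHom _ (A.ρ n)
  ofMulActionFinsupp F G (Vert X n)

/-- The subspace of `F[α]` of formal sums whose coefficients sum to zero. -/
noncomputable def zeroSum (F : Type) [Field F] (α : Type) : Submodule F (α →₀ F) :=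
  LinearMap.ker (Finsupp.linearCombination F (fun _ : α => (1 : F)))

/-- `π` occurs in the zero-coefficient-sum part `F[D(v)]⁰` of the permutation
module `F[D(v)]`. -/
def OccursInZero {X : ℕ → Type} {G : Type} [Group G] (A : TreeAction X G)
    (F : Type) [Field F] {n : ℕ} {v : Vert X n} {V : Type} [AddCommGroup V]
    [Module F V] (π : Representation F (stab A v) V) : Prop :=
  ∃ j : V →ₗ[F] (Desc X v →₀ F), Function.Injective j ∧
    (∀ (g : stab A v) (x : V), j (π g x) = descRep F A v g (j x)) ∧
    ∀ x : V, j x ∈ zeroSum F (Desc X v)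

section AuxStmt11

variable {X : ℕ → Type} {G : Type} [Group G]
variable {F : Type} [Field F]

/-- Descendants of `v` are in bijection with `X n`. -/
def descEquiv {n : ℕ} (v : Vert X n) : Desc X v ≃ X n where
  toFun w := w.1 (Fin.last n)
  invFun x := ⟨Fin.snoc v x, funext fun i =>
    Fin.snoc_castSucc (α := fun i : Fin (n + 1) => X i.val) x v i⟩
  left_inv w := by
    apply Subtype.ext
    funext i
    show (Fin.snoc (α := fun i : Fin (n + 1) => X i.val) v (w.1 (Fin.last n))) i = w.1 i
    rcases Fin.eq_castSucc_or_eq_last i with ⟨j, rfl⟩ | rfl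
    · rw [Fin.snoc_castSucc]
      exact (congrFun w.2 j).symm
    · rw [Fin.snoc_last]
  right_inv x := Fin.snoc_last (α := fun i : Fin (n + 1) => X i.val) x v

lemma occ_bound {n : ℕ} {v : Vert X n} [∀ i, Fintype (X i)] (A : TreeAction X G)
    {Vπ : Type} [AddCommGroup Vπ] [Module F Vπ] [Nontrivial Vπ]
    {π : Representation F (stab A v) Vπ} (hocc : OccursInZero A F π) :
    FiniteDimensional F Vπ ∧ Module.finrank F Vπ + 1 ≤ Fintype.card (X n) := by
  obtain ⟨j, hinj, -, hmem⟩ := hocc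
  letI : Fintype (Desc X v) := Fintype.ofEquiv _ (descEquiv v).symm
  haveI : FiniteDimensional F (Desc X v →₀ F) := by
    exact Module.Finite.equiv (Finsupp.linearEquivFunOnFinite F F (Desc X v)).symm
  haveI hfd : FiniteDimensional F Vπ := FiniteDimensional.of_injective j hinj
  refine ⟨hfd, ?_⟩
  have hpos : 0 < Module.finrank F Vπ := Module.finrank_pos
  set L := Finsupp.linearCombination F (fun _ : Desc X v => (1 : F)) with hL
  have hle : Module.finrank F Vπ ≤ Module.finrank F (zeroSum F (Desc X v)) := by
    have hinj' : Function.Injective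
        (j.codRestrict (zeroSum F (Desc X v)) hmem) := by
      intro a b hab
      exact hinj (congrArg Subtype.val hab)
    exact LinearMap.finrank_le_finrank_of_injective hinj'
  haveI : Nonempty (Desc X v) := by
    by_contra hne
    haveI : IsEmpty (Desc X v) := not_nonempty_iff.mp hne
    haveI : Subsingleton (Desc X v →₀ F) := by
      constructor
      intro a b
      ext d
      exact isEmptyElim d
    haveI : Subsingleton (zeroSum F (Desc X v)) := by
      constructor
      intro a b
      exact Subtype.ext (Subsingleton.elim _ _)
    have hz : Module.finrank F (zeroSum F (Desc X v)) = 0 :=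
      Module.finrank_zero_of_subsingleton
    omega
  have hsurj : Function.Surjective L := by
    intro r
    refine ⟨Finsupp.single (Classical.arbitrary _) r, ?_⟩
    rw [hL, Finsupp.linearCombination_single, smul_eq_mul, mul_one]
  have hrank := LinearMap.finrank_range_add_finrank_ker L
  rw [LinearMap.range_eq_top.mpr hsurj, finrank_top, Module.finrank_self,
    Module.finrank_finsupp_self] at hrank
  have hcard : Fintype.card (Desc X v) = Fintype.card (X n) :=
    Fintype.card_congr (descEquiv v)
  have hz : zeroSum F (Desc X v) = LinearMap.ker L := by rw [hL]; rfl
  rw [← hz] at hrank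
  omega

/-- The induced module is linearly isomorphic to functions on the level. -/
noncomputable def indEquiv (A : TreeAction X G) (hst : SphTrans A) {n : ℕ} (v : Vert X n)
    {Vπ : Type} [AddCommGroup Vπ] [Module F Vπ] (π : Representation F (stab A v) Vπ) :
    IndCarrier (stab A v) π ≃ₗ[F] (Vert X n → Vπ) := by
  choose c hc using fun u => hst n v u
  have hmem : ∀ x : G, x * c (A.ρ n x⁻¹ v) ∈ stab A v := by
    intro x
    show A.ρ n (x * c (A.ρ n x⁻¹ v)) v = v
    rw [map_mul, Equiv.Perm.mul_apply, hc, map_inv]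
    exact Equiv.apply_symm_apply _ _
  refine
    { toFun := fun f u => f.1 ((c u)⁻¹)
      map_add' := fun f g => rfl
      map_smul' := fun r f => rfl
      invFun := fun h => ⟨fun x => π ⟨x * c (A.ρ n x⁻¹ v), hmem x⟩ (h (A.ρ n x⁻¹ v)), ?_⟩
      left_inv := ?_
      right_inv := ?_ }
  · intro s x
    have hsinv : A.ρ n ((s : G))⁻¹ v = v := (stab A v).inv_mem s.2
    have h1 : A.ρ n ((s : G) * x)⁻¹ v = A.ρ n x⁻¹ v := by
      rw [mul_inv_rev, map_mul, Equiv.Perm.mul_apply, hsinv]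
    have hcongr : ∀ (a b : ↥(stab A v)), (a : G) = (b : G) → ∀ z : Vπ, π a z = π b z :=
      fun a b hab z => by rw [Subtype.ext hab]
    simp only [h1]
    rw [← Module.End.mul_apply, ← map_mul]
    exact hcongr _ _ (by push_cast [mul_assoc]; rfl) _
  · intro f
    apply Subtype.ext
    funext x
    have h3 : f.1 ((x * c (A.ρ n x⁻¹ v)) * (c (A.ρ n x⁻¹ v))⁻¹)
        = π ⟨x * c (A.ρ n x⁻¹ v), hmem x⟩ (f.1 ((c (A.ρ n x⁻¹ v))⁻¹)) :=
      f.2 ⟨x * c (A.ρ n x⁻¹ v), hmem x⟩ ((c (A.ρ n x⁻¹ v))⁻¹)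
    rw [mul_inv_cancel_right] at h3
    exact h3.symm
  · intro h
    funext u
    have hu : A.ρ n ((c u)⁻¹)⁻¹ v = u := by rw [inv_inv]; exact hc u
    have hone : ∀ (g : ↥(stab A v)), (g : G) = 1 → ∀ z : Vπ, π g z = z := by
      intro g hg z
      have hg1 : g = 1 := Subtype.ext hg
      rw [hg1, map_one]
      rfl
    simp only [hu]
    exact hone _ (inv_mul_cancel _) _

lemma finrank_fun_eq {V : Type} [AddCommGroup V] [Module F V] [FiniteDimensional F V]
    (ι : Type) [Fintype ι] :
    Module.finrank F (ι → V) = Fintype.card ι * Module.finrank F V := by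
  rw [Module.finrank_pi_fintype, Finset.sum_const, Finset.card_univ, smul_eq_mul]

end AuxStmt11

/-- For vertices `v`, `w` in different levels `n < m` and nontrivial irreducible
constituents `π` of `F[D(v)]⁰` and `σ` of `F[D(w)]⁰`, the induced representations
`Ind_{St(v)}^G π` and `Ind_{St(w)}^G σ` are not isomorphic. -/
theorem stmt_11 {X : ℕ → Type} [∀ i, Fintype (X i)] {G : Type} [Group G]
    (A : TreeAction X G) (F : Type) [Field F]
    (hchar : ∀ k : ℕ, ¬ (ringChar F ∣ Nat.card (A.ρ k).range))
    (h2 : LocTwoTrans A) {n m : ℕ} (hnm : n < m) (v : Vert X n) (w : Vert X m)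
    (Vπ Vσ : Type) [AddCommGroup Vπ] [Module F Vπ] [AddCommGroup Vσ] [Module F Vσ]
    (π : Representation F (stab A v) Vπ) (σ : Representation F (stab A w) Vσ)
    (hπirr : π.IsIrred) (hπnt : ¬ π.IsTriv) (hπocc : OccursInZero A F π)
    (hσirr : σ.IsIrred) (hσnt : ¬ σ.IsTriv) (hσocc : OccursInZero A F σ) :
    ¬ ∃ e : IndCarrier (stab A v) π ≃ₗ[F] IndCarrier (stab A w) σ,
        ∀ (g : G) (x : IndCarrier (stab A v) π),
          e (IndRep (stab A v) π g x) = IndRep (stab A w) σ g (e x) := by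
  rintro ⟨e, -⟩
  obtain ⟨hst, -⟩ := h2
  haveI : Nontrivial Vπ := hπirr.1
  haveI : Nontrivial Vσ := hσirr.1
  obtain ⟨hfdπ, hbπ⟩ := occ_bound A hπocc
  obtain ⟨hfdσ, hbσ⟩ := occ_bound A hσocc
  have E : (Vert X n → Vπ) ≃ₗ[F] (Vert X m → Vσ) :=
    ((indEquiv A hst v π).symm.trans e).trans (indEquiv A hst w σ)
  have hEq : Fintype.card (Vert X n) * Module.finrank F Vπ
      = Fintype.card (Vert X m) * Module.finrank F Vσ := by
    rw [← finrank_fun_eq (Vert X n), ← finrank_fun_eq (Vert X m)]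
    exact E.finrank_eq
  -- cardinalities of levels as products over ranges
  have hcard : ∀ k : ℕ, Fintype.card (Vert X k)
      = ∏ i ∈ Finset.range k, Fintype.card (X i) := by
    intro k
    rw [Fintype.card_pi, ← Fin.prod_univ_eq_prod_range (fun i => Fintype.card (X i)) k]
  have hdn : 0 < Fintype.card (Vert X n) := @Fintype.card_pos _ _ ⟨v⟩
  have hs : 0 < Module.finrank F Vσ := Module.finrank_pos
  have hstep : Fintype.card (Vert X n) * Fintype.card (X n)
      = Fintype.card (Vert X (n + 1)) := by
    rw [hcard n, hcard (n + 1), Finset.prod_range_succ]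
  have hmono : Fintype.card (Vert X (n + 1)) ≤ Fintype.card (Vert X m) := by
    rw [hcard (n + 1), hcard m]
    apply Finset.prod_le_prod_of_subset_of_one_le'
    · exact Finset.range_subset_range.mpr hnm
    · intro i hi _
      exact @Fintype.card_pos _ _ ⟨w ⟨i, Finset.mem_range.mp hi⟩⟩
  have hlt : Fintype.card (Vert X n) * Module.finrank F Vπ
      < Fintype.card (Vert X m) * Module.finrank F Vσ :=
    calc Fintype.card (Vert X n) * Module.finrank F Vπ
        < Fintype.card (Vert X n) * Fintype.card (X n) :=
          (Nat.mul_lt_mul_left hdn).mpr (by omega)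
      _ = Fintype.card (Vert X (n + 1)) := hstep
      _ ≤ Fintype.card (Vert X m) := hmono
      _ ≤ Fintype.card (Vert X m) * Module.finrank F Vσ :=
          Nat.le_mul_of_pos_right _ hs
  omega
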